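/- Agnostic sample compression generalization (concentration form): let Z be a measurable space, μ a probability measure on Z, k < m natural numbers, and F : Z^k × Z → ℝ a measurable function with 0 ≤ F ≤ 1. Then for every ε > 0, the μ^m-probability of the set of samples s ∈ Z^m for which there exists an injective map σ : Fin k → Fin m such that | (1/(m − k)) · ∑_{j ∉ range σ} F(s ∘ σ, s j) − ∫ F(s ∘ σ, z) dμ(z) | > ε, is at most 2 · m^k · exp(−2 ε² (m − k)). -/

import Mathlib

open MeasureTheory Finset

section AuxHoeffding
open Real

/-- Sharp Hoeffding analytic inequality: for `p ∈ [0,1]`, `t ≥ 0`,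
`1 - p + p e^t ≤ exp (t p + t²/8)`. -/
lemma hoeffding_analytic {p t : ℝ} (hp0 : 0 ≤ p) (hp1 : p ≤ 1) (ht : 0 ≤ t) :
    1 - p + p * exp t ≤ exp (t * p + t ^ 2 / 8) := by
  set D : ℝ → ℝ := fun u => 1 - p + p * exp u with hD
  have hDpos : ∀ u, 0 < D u := by
    intro u
    rcases eq_or_lt_of_le hp0 with h | h
    · simp [hD, ← h]
    · have hDu : D u = 1 - p + p * exp u := rfl
      nlinarith [exp_pos u, mul_pos h (exp_pos u)]
  -- g u = u*p + u^2/8 - log (D u), show g t ≥ 0 = g 0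
  set g : ℝ → ℝ := fun u => u * p + u ^ 2 / 8 - log (D u) with hg
  have hDdiff : ∀ u, HasDerivAt D (p * exp u) u := by
    intro u
    exact ((hasDerivAt_exp u).const_mul p).const_add (1 - p)
  have hgdiff : ∀ u, HasDerivAt g (p + u / 4 - p * exp u / D u) u := by
    intro u
    have h1 : HasDerivAt (fun u : ℝ => u * p + u ^ 2 / 8) (p + u / 4) u := by
      have := ((hasDerivAt_id u).mul_const p).add
        (((hasDerivAt_pow 2 u)).div_const 8)
      exact this.congr_deriv (by norm_num; ring)
    have h2 : HasDerivAt (fun u => log (D u)) (p * exp u / D u) u :=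
      (hDdiff u).log (hDpos u).ne'
    exact h1.sub h2
  -- derivative of g' : g'' = 1/4 - p e^u (1-p) / (D u)^2 ≥ 0
  set g' : ℝ → ℝ := fun u => p + u / 4 - p * exp u / D u with hg'
  have hg'diff : ∀ u, HasDerivAt g'
      (1 / 4 - (p * exp u * D u - p * exp u * (p * exp u)) / (D u) ^ 2) u := by
    intro u
    have h1 : HasDerivAt (fun u : ℝ => p + u / 4) (1 / 4) u := by
      simpa using ((hasDerivAt_id u).div_const 4).const_add p
    have h2 : HasDerivAt (fun u => p * exp u / D u)
        ((p * exp u * D u - p * exp u * (p * exp u)) / (D u) ^ 2) u := by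
      have hnum : HasDerivAt (fun u => p * exp u) (p * exp u) u :=
        (hasDerivAt_exp u).const_mul p
      exact hnum.div (hDdiff u) (hDpos u).ne'
    exact h1.sub h2
  have hg''nonneg : ∀ u, 0 ≤ 1 / 4 - (p * exp u * D u - p * exp u * (p * exp u)) / (D u) ^ 2 := by
    intro u
    rw [sub_nonneg, div_le_iff₀ (pow_pos (hDpos u) 2)]
    have he : 0 < exp u := exp_pos u
    have key : p * exp u * D u - p * exp u * (p * exp u) = (p * exp u) * (1 - p) := by
      simp [hD]; ring
    rw [key]
    have h4 : 4 * ((p * exp u) * (1 - p)) ≤ ((1 - p) + p * exp u) ^ 2 := by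
      nlinarith [sq_nonneg ((1 - p) - p * exp u)]
    have : D u = (1 - p) + p * exp u := by simp [hD]
    nlinarith
  -- g' is monotone, g' 0 = 0, so g' ≥ 0 on [0,∞)
  have hg'mono : Monotone g' :=
    monotone_of_deriv_nonneg (fun u => (hg'diff u).differentiableAt)
      (fun u => by rw [(hg'diff u).deriv]; exact hg''nonneg u)
  have hg'0 : g' 0 = 0 := by simp [hg', hD]
  have hg'nonneg : ∀ u, 0 ≤ u → 0 ≤ g' u := fun u hu => hg'0 ▸ hg'mono hu
  have hgmono : MonotoneOn g (Set.Ici 0) := by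
    apply monotoneOn_of_deriv_nonneg (convex_Ici 0)
      (fun u _ => ((hgdiff u).differentiableAt).continuousAt.continuousWithinAt)
      (fun u _ => ((hgdiff u).differentiableAt).differentiableWithinAt)
    intro u hu
    rw [(hgdiff u).deriv]
    exact hg'nonneg u (le_of_lt (by simpa using hu))
  have hg0 : g 0 = 0 := by simp [hg, hD]
  have : 0 ≤ g t := hg0 ▸ hgmono (Set.self_mem_Ici) ht ht
  have hlog : log (D t) ≤ t * p + t ^ 2 / 8 := by
    simp only [hg] at this; linarith
  calc D t ≤ exp (log (D t)) := by rw [exp_log (hDpos t)]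
    _ ≤ exp (t * p + t ^ 2 / 8) := exp_le_exp.mpr hlog

lemma bounded_integrable {Z : Type*} [MeasurableSpace Z] (μ : Measure Z) [IsProbabilityMeasure μ]
    (f : Z → ℝ) (hf : Measurable f) (c : ℝ) (h0 : ∀ z, 0 ≤ f z) (h1 : ∀ z, f z ≤ c) :
    Integrable f μ := by
  refine Integrable.mono' (integrable_const c) hf.aestronglyMeasurable (ae_of_all _ fun z => ?_)
  rw [Real.norm_eq_abs, abs_of_nonneg (h0 z)]; exact h1 z

lemma mgf_bound {Z : Type*} [MeasurableSpace Z] (μ : Measure Z) [IsProbabilityMeasure μ]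
    (f : Z → ℝ) (hf : Measurable f) (h0 : ∀ z, 0 ≤ f z) (h1 : ∀ z, f z ≤ 1)
    {t : ℝ} (ht : 0 ≤ t) :
    ∫ z, exp (t * (f z - ∫ z, f z ∂μ)) ∂μ ≤ exp (t ^ 2 / 8) := by
  set p : ℝ := ∫ z, f z ∂μ with hp
  have hfint : Integrable f μ := bounded_integrable μ f hf 1 h0 h1
  have hp0 : 0 ≤ p := integral_nonneg h0
  have hp1 : p ≤ 1 := by
    calc p ≤ ∫ _, (1 : ℝ) ∂μ := integral_mono hfint (integrable_const 1) h1
      _ = 1 := by simp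
  have hptwise : ∀ z, exp (t * f z) ≤ 1 - f z + f z * exp t := by
    intro z
    have := convexOn_exp.2 (Set.mem_univ (0:ℝ)) (Set.mem_univ t)
      (by linarith [h1 z] : (0:ℝ) ≤ 1 - f z) (h0 z) (by ring)
    simpa [smul_eq_mul, mul_comm] using this
  have hint1 : Integrable (fun z => exp (t * f z)) μ := by
    refine bounded_integrable μ _ ((hf.const_mul t).exp) (exp t) (fun z => (exp_pos _).le)
      (fun z => exp_le_exp.mpr ?_)
    nlinarith [h0 z, h1 z]
  have hint2 : Integrable (fun z => 1 - f z + f z * exp t) μ :=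
    ((integrable_const (1:ℝ)).sub hfint).add (hfint.mul_const _)
  have hintle : ∫ z, exp (t * f z) ∂μ ≤ 1 - p + p * exp t := by
    calc ∫ z, exp (t * f z) ∂μ ≤ ∫ z, (1 - f z + f z * exp t) ∂μ :=
          integral_mono hint1 hint2 hptwise
      _ = 1 - p + p * exp t := by
          rw [integral_add (by exact (integrable_const (1:ℝ)).sub hfint) (hfint.mul_const _),
            integral_sub (integrable_const 1) hfint, integral_mul_const]
          simp [hp]
  have key : ∫ z, exp (t * (f z - p)) ∂μ = (∫ z, exp (t * f z) ∂μ) * exp (-(t * p)) := by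
    rw [← integral_mul_const]
    congr 1; funext z; rw [← exp_add]; ring_nf
  rw [key]
  calc (∫ z, exp (t * f z) ∂μ) * exp (-(t * p))
      ≤ exp (t * p + t ^ 2 / 8) * exp (-(t * p)) := by
        apply mul_le_mul_of_nonneg_right _ (exp_pos _).le
        exact hintle.trans (hoeffding_analytic hp0 hp1 ht)
    _ = exp (t ^ 2 / 8) := by rw [← exp_add]; ring_nf

lemma hoeffding_one_sided {Z : Type*} [MeasurableSpace Z] (μ : Measure Z) [IsProbabilityMeasure μ]
    (ι : Type*) [Fintype ι] (f : Z → ℝ) (hf : Measurable f)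
    (h0 : ∀ z, 0 ≤ f z) (h1 : ∀ z, f z ≤ 1) (ε : ℝ) (hε : 0 < ε) :
    (Measure.pi fun _ : ι => μ)
      {y : ι → Z | (Fintype.card ι : ℝ) * ε ≤ ∑ i, (f (y i) - ∫ z, f z ∂μ)}
      ≤ ENNReal.ofReal (exp (-2 * ε ^ 2 * (Fintype.card ι : ℝ))) := by
  classical
  set n : ℕ := Fintype.card ι with hn
  set p : ℝ := ∫ z, f z ∂μ with hp
  set t : ℝ := 4 * ε with htdef
  have ht : 0 ≤ t := by positivity
  set G : (ι → Z) → ℝ := fun y => ∏ i, exp (t * (f (y i) - p)) with hG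
  letI : MeasureSpace Z := ⟨μ⟩
  have hvol : (volume : Measure (ι → Z)) = Measure.pi fun _ : ι => μ := by
    rw [MeasureTheory.volume_pi]; rfl
  -- integral of G
  have hGint_eq : ∫ y, G y = (∫ z, exp (t * (f z - p)) ∂μ) ^ n := by
    rw [hG]
    exact MeasureTheory.integral_fintype_prod_eq_pow (ι := ι) (fun z => exp (t * (f z - p)))
  have hGmeas : Measurable G := by
    apply Finset.measurable_prod
    intro i _
    exact (((hf.comp (measurable_pi_apply i)).sub measurable_const).const_mul t).exp
  have hGnonneg : ∀ y, 0 ≤ G y := fun y => Finset.prod_nonneg fun i _ => (exp_pos _).le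
  have hGle : ∀ y, G y ≤ exp (t * n) := by
    intro y
    have hp0 : 0 ≤ p := integral_nonneg h0
    calc G y ≤ ∏ _i : ι, exp t := by
          apply Finset.prod_le_prod (fun i _ => (exp_pos _).le)
          intro i _
          apply exp_le_exp.mpr
          nlinarith [h0 (y i), h1 (y i)]
      _ = exp (t * n) := by rw [Finset.prod_const, ← exp_nat_mul, card_univ, mul_comm]
  have hGinteg : Integrable G (Measure.pi fun _ : ι => μ) :=
    bounded_integrable _ G hGmeas (exp (t * n)) hGnonneg hGle
  have hGval : ∫ y, G y ∂(Measure.pi fun _ : ι => μ) ≤ exp ((n : ℝ) * t ^ 2 / 8) := by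
    rw [← hvol, hGint_eq]
    calc (∫ z, exp (t * (f z - p)) ∂μ) ^ n ≤ exp (t ^ 2 / 8) ^ n := by
          apply pow_le_pow_left₀ (integral_nonneg fun z => (exp_pos _).le)
          exact mgf_bound μ f hf h0 h1 ht
      _ = exp ((n : ℝ) * t ^ 2 / 8) := by rw [← exp_nat_mul]; ring_nf
  -- Markov
  have hsubset : {y : ι → Z | (n : ℝ) * ε ≤ ∑ i, (f (y i) - p)} ⊆
      {y : ι → Z | ENNReal.ofReal (exp (t * ((n : ℝ) * ε))) ≤ ENNReal.ofReal (G y)} := by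
    intro y hy
    simp only [Set.mem_setOf_eq] at hy ⊢
    apply ENNReal.ofReal_le_ofReal
    have : G y = exp (t * ∑ i, (f (y i) - p)) := by
      rw [hG, Finset.mul_sum, Real.exp_sum]
    rw [this]
    exact exp_le_exp.mpr (by nlinarith)
  calc (Measure.pi fun _ : ι => μ) {y : ι → Z | (n : ℝ) * ε ≤ ∑ i, (f (y i) - p)}
      ≤ (Measure.pi fun _ : ι => μ)
        {y : ι → Z | ENNReal.ofReal (exp (t * ((n : ℝ) * ε))) ≤ ENNReal.ofReal (G y)} :=
        measure_mono hsubset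
    _ ≤ (∫⁻ y, ENNReal.ofReal (G y) ∂(Measure.pi fun _ : ι => μ)) /
          ENNReal.ofReal (exp (t * ((n : ℝ) * ε))) := by
        apply meas_ge_le_lintegral_div (by exact (ENNReal.measurable_ofReal.comp hGmeas).aemeasurable)
        · simp only [ne_eq, ENNReal.ofReal_eq_zero, not_le]; exact exp_pos _
        · exact ENNReal.ofReal_ne_top
    _ = ENNReal.ofReal (∫ y, G y ∂(Measure.pi fun _ : ι => μ)) /
          ENNReal.ofReal (exp (t * ((n : ℝ) * ε))) := by
        rw [← ofReal_integral_eq_lintegral_ofReal hGinteg (ae_of_all _ hGnonneg)]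
    _ ≤ ENNReal.ofReal (exp ((n : ℝ) * t ^ 2 / 8)) / ENNReal.ofReal (exp (t * ((n : ℝ) * ε))) := by
        exact ENNReal.div_le_div_right (ENNReal.ofReal_le_ofReal hGval) _
    _ = ENNReal.ofReal (exp ((n : ℝ) * t ^ 2 / 8) / exp (t * ((n : ℝ) * ε))) := by
        rw [ENNReal.ofReal_div_of_pos (exp_pos _)]
    _ = ENNReal.ofReal (exp (-2 * ε ^ 2 * (n : ℝ))) := by
        rw [← exp_sub]
        congr 1
        rw [htdef]; ring

lemma hoeffding_two_sided {Z : Type*} [MeasurableSpace Z] (μ : Measure Z) [IsProbabilityMeasure μ]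
    (ι : Type*) [Fintype ι] (hn : 0 < Fintype.card ι) (f : Z → ℝ) (hf : Measurable f)
    (h0 : ∀ z, 0 ≤ f z) (h1 : ∀ z, f z ≤ 1) (ε : ℝ) (hε : 0 < ε) :
    (Measure.pi fun _ : ι => μ)
      {y : ι → Z | ε ≤ |(1 / (Fintype.card ι : ℝ)) * ∑ i, f (y i) - ∫ z, f z ∂μ|}
      ≤ ENNReal.ofReal (2 * exp (-2 * ε ^ 2 * (Fintype.card ι : ℝ))) := by
  set n : ℕ := Fintype.card ι with hndef
  have hnR : (0 : ℝ) < (n : ℝ) := by exact_mod_cast hn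
  set p : ℝ := ∫ z, f z ∂μ with hp
  set g : Z → ℝ := fun z => 1 - f z with hg
  have hq : ∫ z, g z ∂μ = 1 - p := by
    rw [hg]
    rw [integral_sub (integrable_const 1) (bounded_integrable μ f hf 1 h0 h1)]
    simp [hp]
  have hsub : {y : ι → Z | ε ≤ |(1 / (n : ℝ)) * ∑ i, f (y i) - p|} ⊆
      {y : ι → Z | (n : ℝ) * ε ≤ ∑ i, (f (y i) - p)} ∪
      {y : ι → Z | (n : ℝ) * ε ≤ ∑ i, (g (y i) - ∫ z, g z ∂μ)} := by
    intro y hy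
    simp only [Set.mem_setOf_eq, Set.mem_union] at hy ⊢
    have hsum1 : ∑ i, (f (y i) - p) = (∑ i, f (y i)) - (n : ℝ) * p := by
      rw [Finset.sum_sub_distrib, Finset.sum_const, card_univ, nsmul_eq_mul]
    have hsum2 : ∑ i, (g (y i) - ∫ z, g z ∂μ) = (n : ℝ) * p - ∑ i, f (y i) := by
      rw [hq, Finset.sum_sub_distrib, Finset.sum_const, card_univ, nsmul_eq_mul, hg]
      rw [Finset.sum_sub_distrib, Finset.sum_const, card_univ, nsmul_eq_mul]
      ring
    rcases le_abs.mp hy with h | h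
    · left; rw [hsum1]
      rw [one_div, inv_mul_eq_div] at h
      have h' : (ε + p) * (n : ℝ) ≤ ∑ i, f (y i) :=
        (le_div_iff₀ hnR).mp (by linarith)
      linarith
    · right; rw [hsum2]
      rw [one_div, inv_mul_eq_div] at h
      have h' : ∑ i, f (y i) ≤ (p - ε) * (n : ℝ) :=
        (div_le_iff₀ hnR).mp (by linarith)
      nlinarith
  calc (Measure.pi fun _ : ι => μ) {y : ι → Z | ε ≤ |(1 / (n : ℝ)) * ∑ i, f (y i) - p|}
      ≤ (Measure.pi fun _ : ι => μ) ({y : ι → Z | (n : ℝ) * ε ≤ ∑ i, (f (y i) - p)} ∪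
          {y : ι → Z | (n : ℝ) * ε ≤ ∑ i, (g (y i) - ∫ z, g z ∂μ)}) := measure_mono hsub
    _ ≤ _ + _ := measure_union_le _ _
    _ ≤ ENNReal.ofReal (exp (-2 * ε ^ 2 * (n : ℝ))) +
        ENNReal.ofReal (exp (-2 * ε ^ 2 * (n : ℝ))) := by
        gcongr
        · exact hoeffding_one_sided μ ι f hf h0 h1 ε hε
        · exact hoeffding_one_sided μ ι g ((measurable_const.sub hf))
            (fun z => by simp [hg]; linarith [h1 z]) (fun z => by simp [hg]; linarith [h0 z]) ε hε
    _ = ENNReal.ofReal (2 * exp (-2 * ε ^ 2 * (n : ℝ))) := by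
        rw [← ENNReal.ofReal_add (exp_pos _).le (exp_pos _).le]; ring_nf

end AuxHoeffding

open Classical in
/-- Agnostic sample compression generalization (concentration form): if
`F (w, z) ∈ [0,1]` is the loss at `z` of the predictor reconstructed from the
compression tuple `w`, then the probability, over an i.i.d. sample `s` of size
`m`, that for some injective compression map `σ : Fin k → Fin m` the empirical
error over the `m − k` points outside the compression set deviates from the true
error by more than `ε`, is at most `2 · m^k · exp(−2 ε² (m − k))`. -/
theorem agnostic_compression_generalization
    {Z : Type*} [MeasurableSpace Z] (μ : Measure Z) [IsProbabilityMeasure μ]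
    (k m : ℕ) (hkm : k < m)
    (F : (Fin k → Z) × Z → ℝ) (hF : Measurable F)
    (hF0 : ∀ w z, 0 ≤ F (w, z)) (hF1 : ∀ w z, F (w, z) ≤ 1)
    (ε : ℝ) (hε : 0 < ε) :
    (Measure.pi fun _ : Fin m => μ)
      {s : Fin m → Z | ∃ σ : Fin k → Fin m, Function.Injective σ ∧
        ε < |(1 / ((m : ℝ) - k)) *
              ∑ j ∈ Finset.univ.filter (fun j : Fin m => j ∉ Set.range σ),
                F (s ∘ σ, s j) -
            ∫ z, F (s ∘ σ, z) ∂μ|} ≤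
      ENNReal.ofReal (2 * (m : ℝ) ^ k * Real.exp (-2 * ε ^ 2 * ((m : ℝ) - k))) := by
  classical
  set n : ℕ := m - k with hndef
  have hkm' : k ≤ m := hkm.le
  have hn : 0 < n := Nat.sub_pos_of_lt hkm
  have hcast : (m : ℝ) - k = (n : ℝ) := by
    rw [hndef]; push_cast [hkm']; ring
  set c : ENNReal := ENNReal.ofReal (2 * Real.exp (-2 * ε ^ 2 * (n : ℝ))) with hc
  set Pm : Measure (Fin m → Z) := Measure.pi fun _ : Fin m => μ with hPm
  -- measurability of the integral term
  have hI : Measurable fun w : Fin k → Z => ∫ z, F (w, z) ∂μ :=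
    hF.stronglyMeasurable.integral_prod_right'.measurable
  -- the per-σ event
  set A : (Fin k → Fin m) → Set (Fin m → Z) := fun σ =>
    {s : Fin m → Z | ε < |(1 / ((m : ℝ) - k)) *
        ∑ j ∈ Finset.univ.filter (fun j : Fin m => j ∉ Set.range σ), F (s ∘ σ, s j) -
      ∫ z, F (s ∘ σ, z) ∂μ|} with hA
  have key : ∀ σ : Fin k → Fin m, Function.Injective σ → Pm (A σ) ≤ c := by
    intro σ hσ
    set P : Fin m → Prop := fun j => j ∈ Set.range σ with hP
    have hcardP : Fintype.card {j // P j} = k := by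
      rw [show Fintype.card {j // P j} = Fintype.card (Fin k) from
        Fintype.card_congr (Equiv.ofInjective σ hσ).symm, Fintype.card_fin]
    have hcardQ : Fintype.card {j // ¬ P j} = n := by
      rw [Fintype.card_subtype_compl, hcardP, Fintype.card_fin]
    set e := MeasurableEquiv.piEquivPiSubtypeProd (fun _ : Fin m => Z) P with he
    have hmp := measurePreserving_piEquivPiSubtypeProd (fun _ : Fin m => μ) P
    set w : ({j // P j} → Z) → (Fin k → Z) := fun x i => x ⟨σ i, ⟨i, rfl⟩⟩ with hw
    have hwmeas : Measurable w :=
      measurable_pi_lambda _ fun i => measurable_pi_apply _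
    set B : Set (({j // P j} → Z) × ({j // ¬ P j} → Z)) :=
      {xy | ε < |(1 / ((m : ℝ) - k)) * ∑ q : {j // ¬ P j}, F (w xy.1, xy.2 q) -
        ∫ z, F (w xy.1, z) ∂μ|} with hB
    have hBmeas : MeasurableSet B := by
      apply measurableSet_lt measurable_const
      apply Measurable.abs
      apply Measurable.sub
      · apply Measurable.const_mul
        apply Finset.measurable_sum
        intro q _
        exact hF.comp ((hwmeas.comp measurable_fst).prodMk
          ((measurable_pi_apply q).comp measurable_snd))
      · exact (hI.comp (hwmeas.comp measurable_fst))
    have hAeq : A σ = e ⁻¹' B := by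
      ext s
      simp only [hA, hB, Set.mem_setOf_eq, Set.mem_preimage]
      have h1 : w (e s).1 = s ∘ σ := by
        funext i; rfl
      have h2 : ∑ q : {j // ¬ P j}, F (w (e s).1, (e s).2 q) =
          ∑ j ∈ Finset.univ.filter (fun j : Fin m => j ∉ Set.range σ), F (s ∘ σ, s j) := by
        rw [h1]
        exact (Finset.sum_subtype (p := fun j => ¬ P j) _
          (fun x => by simp [hP]) (fun j => F (s ∘ σ, s j))).symm
      rw [h2, h1]
    rw [hAeq, hPm, hmp.measure_preimage hBmeas.nullMeasurableSet]
    rw [Measure.prod_apply hBmeas]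
    have hslice : ∀ x : {j // P j} → Z,
        (Measure.pi fun _ : {j // ¬ P j} => μ) (Prod.mk x ⁻¹' B) ≤ c := by
      intro x
      have hsub : Prod.mk x ⁻¹' B ⊆
          {y : {j // ¬ P j} → Z | ε ≤ |(1 / (Fintype.card {j // ¬ P j} : ℝ)) *
            ∑ q, F (w x, y q) - ∫ z, F (w x, z) ∂μ|} := by
        intro y hy
        simp only [hB, Set.mem_preimage, Set.mem_setOf_eq] at hy ⊢
        rw [hcardQ, ← hcast]
        exact hy.le
      calc (Measure.pi fun _ : {j // ¬ P j} => μ) (Prod.mk x ⁻¹' B)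
          ≤ (Measure.pi fun _ : {j // ¬ P j} => μ)
            {y : {j // ¬ P j} → Z | ε ≤ |(1 / (Fintype.card {j // ¬ P j} : ℝ)) *
              ∑ q, F (w x, y q) - ∫ z, F (w x, z) ∂μ|} := measure_mono hsub
        _ ≤ ENNReal.ofReal (2 * Real.exp (-2 * ε ^ 2 * (Fintype.card {j // ¬ P j} : ℝ))) :=
            hoeffding_two_sided μ _ (by rw [hcardQ]; exact hn)
              (fun z => F (w x, z)) (hF.comp measurable_prodMk_left)
              (fun z => hF0 _ z) (fun z => hF1 _ z) ε hε
        _ = c := by rw [hc, hcardQ]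
    exact le_trans (lintegral_mono hslice) (by simp)
  -- union bound
  set S : Finset (Fin k → Fin m) := Finset.univ.filter fun σ => Function.Injective σ with hS
  have hsub : {s : Fin m → Z | ∃ σ : Fin k → Fin m, Function.Injective σ ∧
      ε < |(1 / ((m : ℝ) - k)) *
        ∑ j ∈ Finset.univ.filter (fun j : Fin m => j ∉ Set.range σ), F (s ∘ σ, s j) -
      ∫ z, F (s ∘ σ, z) ∂μ|} ⊆ ⋃ σ ∈ S, A σ := by
    intro s hs
    obtain ⟨σ, hσinj, hσ⟩ := hs
    have hmem : σ ∈ S := by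
      simp only [hS, Finset.mem_filter, Finset.mem_univ, true_and]; exact hσinj
    exact Set.mem_biUnion hmem hσ
  calc Pm _ ≤ Pm (⋃ σ ∈ S, A σ) := measure_mono hsub
    _ ≤ ∑ σ ∈ S, Pm (A σ) := measure_biUnion_finset_le S A
    _ ≤ ∑ σ ∈ S, c := Finset.sum_le_sum fun σ hσ => key σ (by simpa [hS] using hσ)
    _ = S.card • c := (Finset.sum_const c)
    _ = (S.card : ENNReal) * c := by rw [nsmul_eq_mul]
    _ ≤ ((m ^ k : ℕ) : ENNReal) * c := by
        apply mul_le_mul_left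
        apply Nat.cast_le.mpr
        calc S.card ≤ Fintype.card (Fin k → Fin m) := Finset.card_filter_le _ _
          _ = m ^ k := by simp [Fintype.card_fun]
    _ = ENNReal.ofReal (2 * (m : ℝ) ^ k * Real.exp (-2 * ε ^ 2 * ((m : ℝ) - k))) := by
        rw [hc, hcast]
        rw [← ENNReal.ofReal_natCast (m ^ k), ← ENNReal.ofReal_mul (by positivity)]
        congr 1
        push_cast
        ring
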